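/- arXiv:2402.10556 — 7 statements merged into one kernel-verified Lean document; each statement's English description precedes it below -/
import Mathlib

section
/- In any Jordan algebra over a field of characteristic ≠ 2, the function k(x,y;z,t) := (xy,z,t) - (x,z,t)y - x(y,z,t) is symmetric in x and y, symmetric in z and t, and satisfies k(x,y;z,t) = k(z,t;x,y). -/
/-- The associator of a bilinear multiplication. -/
def jassoc {F J : Type*} [Field F] [AddCommGroup J] [Module F J]
    (m : J →ₗ[F] J →ₗ[F] J) (x y z : J) : J :=
  m (m x y) z - m x (m y z)

/-- The Pchelintsev–Shestakov function k(x,y;z,t) = (xy,z,t) - (x,z,t)y - x(y,z,t). -/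
def kfun {F J : Type*} [Field F] [AddCommGroup J] [Module F J]
    (m : J →ₗ[F] J →ₗ[F] J) (x y z t : J) : J :=
  jassoc m (m x y) z t - m (jassoc m x z t) y - m x (jassoc m y z t)

/-- k(x,y;z,t) is symmetric in x,y, symmetric in z,t, and k(x,y;z,t)=k(z,t;x,y). -/
theorem stmt5 {F J : Type*} [Field F] [AddCommGroup J] [Module F J]
    (hchar : (2 : F) ≠ 0)
    (m : J →ₗ[F] J →ₗ[F] J)
    (comm : ∀ x y : J, m x y = m y x)
    (jordan : ∀ x y : J, m (m (m x x) y) x = m (m x x) (m y x))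
    (x y z t : J) :
    kfun m x y z t = kfun m y x z t ∧
    kfun m x y z t = kfun m x y t z ∧
    kfun m x y z t = kfun m z t x y := by
  have halve : ∀ v : J, v + v = 0 → v = 0 := by
    intro v hv
    have h2 : (2 : F) • v = 0 := by rw [two_smul]; exact hv
    have := inv_smul_smul₀ hchar v
    rw [h2, smul_zero] at this; exact this.symm
  have h1 : ∀ a b : J, jassoc m (m a a) b a = 0 := by
    intro a b; rw [jassoc, sub_eq_zero]; exact jordan a b
  have h2 : ∀ a c b : J,
      jassoc m (m a c) b c + jassoc m (m a c) b c + jassoc m (m c c) b a = 0 := by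
    intro a c b
    apply halve
    have e1 := h1 (a + c) b
    have e2 := h1 (a - c) b
    have e3 := h1 a b
    simp only [jassoc, map_add, map_sub, LinearMap.add_apply, LinearMap.sub_apply, comm]
      at e1 e2 e3 ⊢
    linear_combination (norm := abel1) e1 + e2 - e3 - e3
  have star : ∀ u v w s : J,
      jassoc m (m u v) s w + jassoc m (m v w) s u + jassoc m (m w u) s v = 0 := by
    intro u v w s
    apply halve
    have e1 := h2 u (v + w) s
    have e2 := h2 u v s
    have e3 := h2 u w s
    simp only [jassoc, map_add, map_sub, LinearMap.add_apply, LinearMap.sub_apply, comm]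
      at e1 e2 e3 ⊢
    linear_combination (norm := abel1) e1 - e2 - e3
  refine ⟨?_, ?_, ?_⟩
  · simp only [kfun, jassoc, map_add, map_sub, LinearMap.add_apply, LinearMap.sub_apply, comm]
    abel1
  · have s1 := star x y t z
    have s2 := star x y z t
    simp only [kfun, jassoc, map_add, map_sub, LinearMap.add_apply, LinearMap.sub_apply, comm]
      at s1 s2 ⊢
    linear_combination (norm := abel1) s1 - s2
  · have s1 := star x z t y
    have s2 := star x y z t
    simp only [kfun, jassoc, map_add, map_sub, LinearMap.add_apply, LinearMap.sub_apply, comm]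
      at s1 s2 ⊢
    linear_combination (norm := abel1) s1 - s2
end

section
/- Let J be a unital Jordan algebra over a field of characteristic ≠ 2 and let A be a unital subalgebra of J isomorphic to H₂(F) (the 3-dimensional Jordan algebra of symmetric 2×2 matrices over F), with the same identity element. Then the set Z = {z ∈ J : (z,a,b) = 0 for all a,b ∈ A} is a subalgebra of J. -/
/-- The copy of H₂(F) inside J, spanned by 1, e = e₁₁, h = e₁₂+e₂₁. -/
def H2span {F J : Type*} [Field F] [AddCommGroup J] [Module F J]
    (one e h : J) : Submodule F J :=
  Submodule.span F {one, e, h}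

/-- Z = the set of elements associating with every pair of elements of H₂(F). -/
def Zset {F J : Type*} [Field F] [AddCommGroup J] [Module F J]
    (m : J →ₗ[F] J →ₗ[F] J) (one e h : J) : Set J :=
  {z : J | ∀ a ∈ H2span (F := F) one e h, ∀ b ∈ H2span (F := F) one e h, jassoc m z a b = 0}

/-- N = {n ∈ J : en = ½n, hn = 0}. -/
def Nset {F J : Type*} [Field F] [AddCommGroup J] [Module F J]
    (m : J →ₗ[F] J →ₗ[F] J) (e h : J) : Set J :=
  {n : J | m e n = (2 : F)⁻¹ • n ∧ m h n = 0}

/-- Z is a subalgebra of J. -/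
theorem stmt6 {F J : Type*} [Field F] [AddCommGroup J] [Module F J]
    (hchar : (2 : F) ≠ 0)
    (m : J →ₗ[F] J →ₗ[F] J)
    (comm : ∀ x y : J, m x y = m y x)
    (jordan : ∀ x y : J, m (m (m x x) y) x = m (m x x) (m y x))
    (one e h : J)
    (one_mul : ∀ x : J, m one x = x)
    (hee : m e e = e) (hhh : m h h = one) (heh : m e h = (2 : F)⁻¹ • h)
    (hli : LinearIndependent F ![one, e, h]) :
    (∀ z ∈ Zset m one e h, ∀ w ∈ Zset m one e h, m z w ∈ Zset m one e h) ∧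
    (∀ z ∈ Zset m one e h, ∀ w ∈ Zset m one e h, z + w ∈ Zset m one e h) ∧
    (∀ c : F, ∀ z ∈ Zset m one e h, c • z ∈ Zset m one e h) := by
  classical
  have heMem : e ∈ H2span (F := F) one e h := Submodule.subset_span (by simp)
  have hhMem : h ∈ H2span (F := F) one e h := Submodule.subset_span (by simp)
  have half : ∀ u v : J, (2 : F) • u = (2 : F) • v → u = v := by
    intro u v huv
    have h2 := congrArg (fun t => (2 : F)⁻¹ • t) huv
    simpa [smul_smul, inv_mul_cancel₀ hchar] using h2
  -- fully expanded instance of the Jordan identity at x + a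
  have key : ∀ x a y : J,
      (2 : F) • m (m (m x a) y) x + m (m (m x x) y) a
        + ((2 : F) • m (m (m x a) y) a + m (m (m a a) y) x)
      = (2 : F) • m (m x a) (m y x) + m (m x x) (m y a)
        + ((2 : F) • m (m x a) (m y a) + m (m a a) (m y x)) := by
    intro x a y
    have h1 := jordan (x + a) y
    have h2 := jordan x y
    have h3 := jordan a y
    simp only [map_add, LinearMap.add_apply] at h1
    rw [comm a x] at h1
    linear_combination (norm := module) h1 - h2 - h3
  -- the (first-order) linearized Jordan identity
  have lin1 : ∀ x a y : J,
      (2 : F) • m (m (m x a) y) x + m (m (m x x) y) a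
      = (2 : F) • m (m x a) (m y x) + m (m x x) (m y a) := by
    intro x a y
    have k1 := key x a y
    have k2 := key x ((2 : F) • a) y
    simp only [map_smul, LinearMap.smul_apply, smul_smul] at k2
    have k3 : (2 : F) • ((2 : F) • m (m (m x a) y) x + m (m (m x x) y) a)
        = (2 : F) • ((2 : F) • m (m x a) (m y x) + m (m x x) (m y a)) := by
      linear_combination (norm := module) (4 : F) • k1 - k2
    exact half _ _ k3
  -- e commutes (as an operator) with any L_e-fixed element
  have comm_e_of : ∀ a : J, m e a = a → ∀ y : J, m e (m a y) = m a (m e y) := by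
    intro a hA y
    have l := lin1 e a y
    rw [hee, hA] at l
    rw [comm (m a y) e, comm (m e y) a, comm y e, comm y a] at l
    linear_combination (norm := module) l
  -- the operator commutation [L_e, L_z] = 0 for z with e(ez) = ez
  have Ecomm : ∀ z : J, m e (m e z) = m e z → ∀ y : J, m e (m z y) = m z (m e y) := by
    intro z hz1 y
    have l := lin1 e z y
    rw [hee] at l
    rw [comm (m (m e z) y) e, comm_e_of (m e z) hz1 y, comm (m e y) z,
      comm y e, comm y z] at l
    exact (add_left_cancel l).symm
  -- the operator commutation [L_h, L_z] = 0 for z with h(hz) = z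
  have Hcomm : ∀ z : J, m h (m h z) = z → ∀ y : J, m h (m z y) = m z (m h y) := by
    intro z hz4 y
    have l := lin1 h (m h z) y
    rw [hhh, hz4] at l
    rw [one_mul y, one_mul (m y (m h z))] at l
    have l2 : (2 : F) • m (m z y) h = (2 : F) • m z (m y h) := add_right_cancel l
    have l3 := half _ _ l2
    rw [comm (m z y) h, comm y h] at l3
    exact l3
  -- extraction of the four basic conditions from membership in Z
  have getc : ∀ z : J, z ∈ Zset m one e h →
      (m e (m e z) = m e z) ∧ (m h (m e z) = (2 : F)⁻¹ • m h z) ∧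
      (m e (m h z) = (2 : F)⁻¹ • m h z) ∧ (m h (m h z) = z) := by
    intro z hz
    simp only [Zset, Set.mem_setOf_eq] at hz
    have c1 := hz e heMem e heMem
    have c2 := hz e heMem h hhMem
    have c3 := hz h hhMem e heMem
    have c4 := hz h hhMem h hhMem
    rw [jassoc, sub_eq_zero] at c1 c2 c3 c4
    refine ⟨?_, ?_, ?_, ?_⟩
    · rw [hee] at c1
      rw [comm z e, comm (m e z) e] at c1
      exact c1
    · rw [heh, map_smul] at c2
      rw [comm z e, comm (m e z) h, comm z h] at c2
      exact c2
    · rw [comm h e, heh, map_smul] at c3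
      rw [comm z h, comm (m h z) e] at c3
      exact c3
    · rw [hhh, comm z one, one_mul z] at c4
      rw [comm z h, comm (m h z) h] at c4
      exact c4
  -- a sufficient criterion for membership in Z
  have memZ : ∀ q : J, m e (m e q) = m e q →
      m h (m e q) = (2 : F)⁻¹ • m h q →
      m e (m h q) = (2 : F)⁻¹ • m h q →
      m h (m h q) = q → q ∈ Zset m one e h := by
    intro q q1 q2 q3 q4
    have mqone : m q one = q := by rw [comm q one]; exact one_mul q
    have base : ∀ g ∈ ({one, e, h} : Set J), ∀ b ∈ ({one, e, h} : Set J),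
        jassoc m q g b = 0 := by
      intro g hg b hb
      simp only [Set.mem_insert_iff, Set.mem_singleton_iff] at hg hb
      rcases hg with hg | hg | hg <;> rcases hb with hb | hb | hb <;>
        rw [hg, hb] <;> simp only [jassoc, sub_eq_zero]
      · rw [one_mul one, mqone, mqone]
      · rw [one_mul e, mqone]
      · rw [one_mul h, mqone]
      · rw [comm e one, one_mul e, comm (m q e) one, one_mul (m q e)]
      · rw [hee, comm q e, comm (m e q) e, q1]
      · rw [heh, map_smul, comm q e, comm (m e q) h, q2, comm h q]
      · rw [comm h one, one_mul h, comm (m q h) one, one_mul (m q h)]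
      · rw [comm h e, heh, map_smul, comm q h, comm (m h q) e, q3]
      · rw [hhh, mqone, comm q h, comm (m h q) h, q4]
    simp only [Zset, Set.mem_setOf_eq]
    intro a ha b hb
    have gb : ∀ g ∈ ({one, e, h} : Set J), jassoc m q g b = 0 := by
      intro g hg
      have hker : H2span (F := F) one e h ≤
          LinearMap.ker (m (m q g) - (m q) ∘ₗ (m g)) := by
        rw [H2span, Submodule.span_le]
        intro b' hb'
        simp only [SetLike.mem_coe, LinearMap.mem_ker, LinearMap.sub_apply,
          LinearMap.coe_comp, Function.comp_apply]
        have hbb := base g hg b' hb'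
        simpa only [jassoc] using hbb
      have := hker hb
      simp only [LinearMap.mem_ker, LinearMap.sub_apply, LinearMap.coe_comp,
        Function.comp_apply] at this
      simpa only [jassoc] using this
    have hker2 : H2span (F := F) one e h ≤
        LinearMap.ker ((m.flip b) ∘ₗ (m q) - (m q) ∘ₗ (m.flip b)) := by
      rw [H2span, Submodule.span_le]
      intro g hg
      simp only [SetLike.mem_coe, LinearMap.mem_ker, LinearMap.sub_apply,
        LinearMap.coe_comp, Function.comp_apply, LinearMap.flip_apply]
      have := gb g hg
      simpa only [jassoc] using this
    have := hker2 ha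
    simp only [LinearMap.mem_ker, LinearMap.sub_apply, LinearMap.coe_comp,
      Function.comp_apply, LinearMap.flip_apply] at this
    simpa only [jassoc] using this
  refine ⟨?_, ?_, ?_⟩
  · -- closure under multiplication
    intro z hz w hw
    obtain ⟨z1, z2, z3, z4⟩ := getc z hz
    obtain ⟨w1, w2, w3, w4⟩ := getc w hw
    have Ez := Ecomm z z1
    have Hz := Hcomm z z4
    refine memZ (m z w) ?_ ?_ ?_ ?_
    · rw [Ez w, Ez (m e w), w1]
    · rw [Ez w, Hz (m e w), w2, map_smul, Hz w]
    · rw [Hz w, Ez (m h w), w3, map_smul]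
    · rw [Hz w, Hz (m h w), w4]
  · -- closure under addition
    intro z hz w hw
    simp only [Zset, Set.mem_setOf_eq] at hz hw ⊢
    intro a ha b hb
    have h1 := hz a ha b hb
    have h2 := hw a ha b hb
    simp only [jassoc] at h1 h2 ⊢
    simp only [map_add, LinearMap.add_apply]
    linear_combination (norm := module) h1 + h2
  · -- closure under scalar multiplication
    intro c z hz
    simp only [Zset, Set.mem_setOf_eq] at hz ⊢
    intro a ha b hb
    have h1 := hz a ha b hb
    simp only [jassoc] at h1 ⊢
    simp only [map_smul, LinearMap.smul_apply]
    rw [← smul_sub, h1, smul_zero]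
end

section
/- Let J be a unital Jordan algebra over a field of characteristic ≠ 2 containing H₂(F) as a unital subalgebra, and let Z = {z ∈ J : (z,a,b) = 0 for all a,b ∈ H₂(F)}. Then (Z, J, H₂(F)) = 0, i.e., (z,x,a) = 0 for all z ∈ Z, x ∈ J, a ∈ H₂(F). -/
/-- Antisymmetry of the associator in outer arguments, for commutative m. -/
lemma jassoc_antisymm {F J : Type*} [Field F] [AddCommGroup J] [Module F J]
    (m : J →ₗ[F] J →ₗ[F] J) (comm : ∀ x y : J, m x y = m y x) (a y c : J) :
    jassoc m a y c = - jassoc m c y a := by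
  simp only [jassoc]
  rw [comm (m a y) c, comm a y, comm a (m y c), comm y c]
  abel

/-- Linearized Jordan identity: (x²,y,u) + 2(xu,y,x) = 0. -/
lemma jordan_lin {F J : Type*} [Field F] [AddCommGroup J] [Module F J]
    (hchar : (2 : F) ≠ 0)
    (m : J →ₗ[F] J →ₗ[F] J)
    (comm : ∀ x y : J, m x y = m y x)
    (jordan : ∀ x y : J, m (m (m x x) y) x = m (m x x) (m y x))
    (x u y : J) :
    jassoc m (m x x) y u + jassoc m (m x u) y x + jassoc m (m x u) y x = 0 := by
  have h1 := jordan (x + u) y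
  have h2 := jordan (x - u) y
  have h3 := jordan u y
  simp only [map_add, map_sub, LinearMap.add_apply, LinearMap.sub_apply] at h1 h2
  have hc : m u x = m x u := comm u x
  simp only [hc] at h1 h2
  have key : (jassoc m (m x x) y u + jassoc m (m x u) y x + jassoc m (m x u) y x)
      + (jassoc m (m x x) y u + jassoc m (m x u) y x + jassoc m (m x u) y x) = 0 := by
    simp only [jassoc]
    linear_combination (norm := module) h1 - h2 - (2:F) • h3
  have h2s : (2 : F) • (jassoc m (m x x) y u + jassoc m (m x u) y x + jassoc m (m x u) y x) = 0 := by
    rw [two_smul]; exact key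
  exact (smul_eq_zero.mp h2s).resolve_left hchar

/-- (Z, J, H₂(F)) = 0. -/
theorem stmt7 {F J : Type*} [Field F] [AddCommGroup J] [Module F J]
    (hchar : (2 : F) ≠ 0)
    (m : J →ₗ[F] J →ₗ[F] J)
    (comm : ∀ x y : J, m x y = m y x)
    (jordan : ∀ x y : J, m (m (m x x) y) x = m (m x x) (m y x))
    (one e h : J)
    (one_mul : ∀ x : J, m one x = x)
    (hee : m e e = e) (hhh : m h h = one) (heh : m e h = (2 : F)⁻¹ • h)
    (hli : LinearIndependent F ![one, e, h]) :
    ∀ z ∈ Zset m one e h, ∀ x : J, ∀ a ∈ H2span (F := F) one e h, jassoc m z x a = 0 := by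
  intro z hz x a ha
  have mul_one' : ∀ p : J, m p one = p := fun p => by rw [comm]; exact one_mul p
  have hone : one ∈ H2span (F := F) one e h := Submodule.subset_span (by simp)
  have hemem : e ∈ H2span (F := F) one e h := Submodule.subset_span (by simp)
  have hhmem : h ∈ H2span (F := F) one e h := Submodule.subset_span (by simp)
  -- associator with one in outer position vanishes
  have jone : ∀ w y : J, jassoc m w y one = 0 := by
    intro w y; simp [jassoc, mul_one']
  have jone' : ∀ w y : J, jassoc m one y w = 0 := by
    intro w y; simp [jassoc, one_mul]
  -- u = ze, v = zh and their properties from z ∈ Z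
  set u : J := m z e with hu_def
  set v : J := m z h with hv_def
  have hue : m u e = u := by
    have h0 := hz e hemem e hemem
    simp only [jassoc, hee] at h0
    exact sub_eq_zero.mp h0
  have hvh : m v h = z := by
    have h0 := hz h hhmem h hhmem
    simp only [jassoc, hhh, mul_one'] at h0
    exact sub_eq_zero.mp h0
  -- (z, x, h) = 0 from linearized identity at (h, v)
  have hzxh : jassoc m z x h = 0 := by
    have A := jordan_lin hchar m comm jordan h v x
    rw [hhh, comm h v, hvh] at A
    rw [jone' v x] at A
    have h2s : (2 : F) • jassoc m z x h = 0 := by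
      rw [two_smul]
      linear_combination (norm := module) A
    exact (smul_eq_zero.mp h2s).resolve_left hchar
  -- (u, x, e) = 0 from linearized identity at (e, u)
  have huxe : jassoc m u x e = 0 := by
    have A := jordan_lin hchar m comm jordan e u x
    rw [hee, comm e u, hue] at A
    rw [jassoc_antisymm m comm e x u] at A
    linear_combination (norm := module) A
  -- (z, x, e) = 0 from linearized identity at (e, z)
  have hzxe : jassoc m z x e = 0 := by
    have A := jordan_lin hchar m comm jordan e z x
    rw [hee, comm e z, ← hu_def, huxe] at A
    rw [jassoc_antisymm m comm z x e]
    linear_combination (norm := module) (-1 : F) • A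
  -- conclude by span induction on a
  induction ha using Submodule.span_induction with
  | mem b hb =>
    simp only [Set.mem_insert_iff, Set.mem_singleton_iff] at hb
    rcases hb with rfl | rfl | rfl
    · exact jone z x
    · exact hzxe
    · exact hzxh
  | zero => simp [jassoc]
  | add b c _ _ h1 h2 =>
    have : jassoc m z x (b + c) = jassoc m z x b + jassoc m z x c := by
      simp only [jassoc, map_add]; abel
    rw [this, h1, h2, add_zero]
  | smul r b _ h1 =>
    have : jassoc m z x (r • b) = r • jassoc m z x b := by
      simp only [jassoc, map_smul, smul_sub]
    rw [this, h1, smul_zero]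
end

section
/- Let J be a unital Jordan algebra over a field of characteristic ≠ 2 containing H₂(F) as a unital subalgebra, and Z = {z ∈ J : (z,a,b) = 0 ∀ a,b ∈ H₂(F)}. Then for all z, v ∈ Z: (ez)(ev) = e(zv) and (hz)(hv) = zv, where e = e₁₁ and h = e₁₂+e₂₁. -/
lemma my_op1 {F J : Type*} [Field F] [AddCommGroup J] [Module F J]
    (hchar : (2 : F) ≠ 0) (m : J →ₗ[F] J →ₗ[F] J)
    (comm : ∀ x y : J, m x y = m y x)
    (jordan : ∀ x y : J, m (m (m x x) y) x = m (m x x) (m y x))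
    (x w a y : J) :
    jassoc m (m x w) y a + jassoc m (m x a) y w + jassoc m (m w a) y x = 0 := by
  have Jz : ∀ s : J, jassoc m (m s s) y s = 0 := fun s => sub_eq_zero_of_eq (jordan s y)
  have half : ∀ u : J, u + u = 0 → u = 0 := by
    intro u hu
    have h2 : (2 : F) • u = 0 := by rw [two_smul]; exact hu
    rcases smul_eq_zero.mp h2 with h' | h'
    · exact absurd h' hchar
    · exact h'
  apply half
  have expand :
      (jassoc m (m x w) y a + jassoc m (m x a) y w + jassoc m (m w a) y x) +
      (jassoc m (m x w) y a + jassoc m (m x a) y w + jassoc m (m w a) y x) =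
      jassoc m (m (x+w+a) (x+w+a)) y (x+w+a)
        - jassoc m (m (x+w) (x+w)) y (x+w)
        - jassoc m (m (x+a) (x+a)) y (x+a)
        - jassoc m (m (w+a) (w+a)) y (w+a)
        + jassoc m (m x x) y x + jassoc m (m w w) y w + jassoc m (m a a) y a := by
    simp only [jassoc, map_add, LinearMap.add_apply, comm w x, comm a x, comm a w]
    abel
  rw [expand, Jz, Jz, Jz, Jz, Jz, Jz, Jz]
  simp

lemma my_key {F J : Type*} [Field F] [AddCommGroup J] [Module F J]
    (hchar : (2 : F) ≠ 0) (m : J →ₗ[F] J →ₗ[F] J)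
    (comm : ∀ x y : J, m x y = m y x)
    (jordan : ∀ x y : J, m (m (m x x) y) x = m (m x x) (m y x))
    (one g z v : J)
    (hone : ∀ x : J, m one x = x)
    (hgg : m g g = one)
    (hz : m (m z g) g = z) (hv : m (m v g) g = v) :
    m (m g z) (m g v) = m z v ∧ m (m g z) v = m g (m z v) := by
  have half : ∀ u u' : J, u + u = u' + u' → u = u' := by
    intro u u' hu
    have h2 : (2 : F) • u = (2 : F) • u' := by rw [two_smul, two_smul]; exact hu
    exact smul_right_injective J hchar h2
  -- R2' : g((ga)d) = (ga)(gd)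
  have R2 : ∀ a d : J, m g (m (m g a) d) = m (m g a) (m g d) := by
    intro a d
    have h0 := my_op1 hchar m comm jordan g g a d
    have h1 : jassoc m (m g g) d a = 0 := by
      simp only [jassoc, hgg, hone]
      exact sub_self _
    rw [h1, zero_add] at h0
    have h2 : jassoc m (m g a) d g = 0 := by
      apply half _ 0
      simpa using h0
    have h3 : m (m (m g a) d) g = m (m g a) (m d g) := by
      simpa only [jassoc, sub_eq_zero] using h2
    rw [comm g (m (m g a) d), comm g d]
    exact h3
  have Minv_v : m g (m g v) = v := by
    rw [comm g v, comm g (m v g)]; exact hv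
  -- M³ = M
  have M3 : ∀ c : J, m g (m g (m g c)) = m g c := by
    intro c
    have h0 := R2 c g
    rw [hgg, comm (m g c) one, hone, comm (m g c) g] at h0
    exact h0
  -- E1 : g(g(zv)) + zv = (gz)(gv) + (gz)(gv)
  have E1 : m g (m g (m z v)) + m z v = m (m g z) (m g v) + m (m g z) (m g v) := by
    have h0 := my_op1 hchar m comm jordan z v g g
    simp only [jassoc] at h0
    rw [hgg, hz, hv, comm (m z v) one, hone, comm z g, comm v g, comm (m g v) (m g z),
        comm (m z v) g, comm (m g (m z v)) g, comm v z] at h0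
    have h1 : m g (m g (m z v)) + m z v - (m (m g z) (m g v) + m (m g z) (m g v)) = 0 := by
      calc m g (m g (m z v)) + m z v - (m (m g z) (m g v) + m (m g z) (m g v))
          = m g (m g (m z v)) - m z v + (m z v - m (m g z) (m g v))
              + (m z v - m (m g z) (m g v)) := by abel
        _ = 0 := h0
    exact sub_eq_zero.mp h1
  -- apply M to E1 : g((gz)(gv)) = g(zv)
  have key1 : m g (m (m g z) (m g v)) = m g (m z v) := by
    have h0 := congrArg (fun u => m g u) E1
    simp only [map_add] at h0
    rw [M3 (m z v)] at h0
    exact (half _ _ h0).symm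
  -- F1 : (gz)v = g(zv)
  have F1 : m (m g z) v = m g (m z v) := by
    have h0 := R2 z (m g v)
    rw [Minv_v, key1] at h0
    exact h0.symm
  -- P = g(g(zv))
  have P_eq : m g (m g (m z v)) = m (m g z) (m g v) := by
    have h0 := R2 z v
    rw [F1] at h0
    exact h0
  have tfix : m z v = m g (m g (m z v)) := by
    have h0 := E1
    rw [← P_eq] at h0
    exact add_left_cancel h0
  exact ⟨(P_eq.symm.trans tfix.symm), F1⟩

/-- (ez)(ev) = e(zv) and (hz)(hv) = zv for all z, v ∈ Z. -/
theorem stmt11 {F J : Type*} [Field F] [AddCommGroup J] [Module F J]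
    (hchar : (2 : F) ≠ 0)
    (m : J →ₗ[F] J →ₗ[F] J)
    (comm : ∀ x y : J, m x y = m y x)
    (jordan : ∀ x y : J, m (m (m x x) y) x = m (m x x) (m y x))
    (one e h : J)
    (one_mul : ∀ x : J, m one x = x)
    (hee : m e e = e) (hhh : m h h = one) (heh : m e h = (2 : F)⁻¹ • h)
    (hli : LinearIndependent F ![one, e, h]) :
    ∀ z ∈ Zset m one e h, ∀ v ∈ Zset m one e h,
      m (m e z) (m e v) = m e (m z v) ∧ m (m h z) (m h v) = m z v := by
  intro z hzZ v hvZ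
  have hmem_one : one ∈ H2span (F := F) one e h := Submodule.subset_span (by simp)
  have hmem_e : e ∈ H2span (F := F) one e h := Submodule.subset_span (by simp)
  have hmem_h : h ∈ H2span (F := F) one e h := Submodule.subset_span (by simp)
  have zfact : ∀ x : J, x ∈ Zset m one e h → ∀ w : J, w ∈ H2span (F := F) one e h →
      m w w = one → m (m x w) w = x := by
    intro x hx w hw hww
    have h0 := hx w hw w hw
    simp only [jassoc, sub_eq_zero] at h0
    rw [h0, hww, comm x one, one_mul]
  -- goal 2 : take g = h
  obtain ⟨goal2, -⟩ := my_key hchar m comm jordan one h z v one_mul hhh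
    (zfact z hzZ h hmem_h hhh) (zfact v hvZ h hmem_h hhh)
  -- goal 1 : take g = k = 2e - 1
  set k : J := (2 : F) • e - one with hk
  have hmem_k : k ∈ H2span (F := F) one e h :=
    sub_mem (Submodule.smul_mem _ _ hmem_e) hmem_one
  have hkx : ∀ x : J, m k x = (2 : F) • m e x - x := by
    intro x
    rw [hk, map_sub, map_smul, LinearMap.sub_apply, LinearMap.smul_apply, one_mul]
  have hkk : m k k = one := by
    rw [hkx k, comm e k, hkx e, hee, hk]
    module
  obtain ⟨k1, k2⟩ := my_key hchar m comm jordan one k z v one_mul hkk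
    (zfact z hzZ k hmem_k hkk) (zfact v hvZ k hmem_k hkk)
  obtain ⟨-, k2'⟩ := my_key hchar m comm jordan one k v z one_mul hkk
    (zfact v hvZ k hmem_k hkk) (zfact z hzZ k hmem_k hkk)
  have zkv : m z (m k v) = m k (m z v) := by
    rw [comm v z, comm (m k v) z] at k2'
    exact k2'
  have hex : ∀ x : J, m e x = (2 : F)⁻¹ • (m k x + x) := by
    intro x
    have h1 : m k x + x = (2 : F) • m e x := by rw [hkx x]; abel
    rw [h1, inv_smul_smul₀ hchar]
  refine ⟨?_, goal2⟩
  rw [hex z, hex v, hex (m z v)]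
  simp only [map_smul, LinearMap.smul_apply, map_add, LinearMap.add_apply, smul_add]
  rw [k1, k2, zkv]
  match_scalars <;> (field_simp; norm_num)
end

section
/- Let J be a unital Jordan algebra over a field of characteristic ≠ 2 containing H₂(F) as a unital subalgebra, Z = {z ∈ J : (z,a,b) = 0 ∀ a,b ∈ H₂(F)}, N = {n ∈ J : en = ½n, hn = 0}. Define [z,n] = h(z,e,n) for z ∈ Z, n ∈ N. Then [z,n] ∈ Z, and [z²,n] = 2z[z,n] = 2[z,zn] for all z ∈ Z, n ∈ N. -/
set_option maxHeartbeats 1600000 in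
/-- With [z,n] := h(z,e,n) for z ∈ Z, n ∈ N: [z,n] ∈ Z and
[z²,n] = 2z[z,n] = 2[z,zn]. -/
theorem stmt13 {F J : Type*} [Field F] [AddCommGroup J] [Module F J]
    (hchar : (2 : F) ≠ 0)
    (m : J →ₗ[F] J →ₗ[F] J)
    (comm : ∀ x y : J, m x y = m y x)
    (jordan : ∀ x y : J, m (m (m x x) y) x = m (m x x) (m y x))
    (one e h : J)
    (one_mul : ∀ x : J, m one x = x)
    (hee : m e e = e) (hhh : m h h = one) (heh : m e h = (2 : F)⁻¹ • h)
    (hli : LinearIndependent F ![one, e, h]) :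
    ∀ z ∈ Zset m one e h, ∀ n ∈ Nset m e h,
      m h (jassoc m z e n) ∈ Zset m one e h ∧
      m h (jassoc m (m z z) e n) = (2 : F) • m z (m h (jassoc m z e n)) ∧
      m h (jassoc m (m z z) e n) = (2 : F) • m h (jassoc m z e (m z n)) := by
  intro z hz n hn
  obtain ⟨hen, hhn⟩ := hn
  simp only [Zset, Set.mem_setOf_eq] at hz
  have he_mem : e ∈ H2span (F := F) one e h := Submodule.subset_span (by simp)
  have hh_mem : h ∈ H2span (F := F) one e h := Submodule.subset_span (by simp)
  have hmul1 : ∀ x : J, m x one = x := fun x => (comm x one).trans (one_mul x)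
  have h4 : (4 : F) ≠ 0 := by have := mul_ne_zero hchar hchar; norm_num at this; exact this
  have h8 : (8 : F) ≠ 0 := by have := mul_ne_zero hchar h4; norm_num at this; exact this
  have h16 : (16 : F) ≠ 0 := by have := mul_ne_zero hchar h8; norm_num at this; exact this
  have h32 : (32 : F) ≠ 0 := by have := mul_ne_zero hchar h16; norm_num at this; exact this
  have h64 : (64 : F) ≠ 0 := by have := mul_ne_zero hchar h32; norm_num at this; exact this
  have h128 : (128 : F) ≠ 0 := by have := mul_ne_zero hchar h64; norm_num at this; exact this
  have h256 : (256 : F) ≠ 0 := by have := mul_ne_zero hchar h128; norm_num at this; exact this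
  have heh2 : m h e = (2 : F)⁻¹ • h := (comm h e).trans heh
  have hen2 : m n e = (2 : F)⁻¹ • n := (comm n e).trans hen
  have hhn2 : m n h = 0 := (comm n h).trans hhn
  have hzf : ∀ a b : J, a ∈ H2span (F := F) one e h → b ∈ H2span (F := F) one e h →
      m (m z a) b = m z (m a b) := fun a b ha hb => sub_eq_zero.mp (hz a ha b hb)
  have hve : m (m z e) e = m z e := by rw [hzf e e he_mem he_mem, hee]
  have hvh : m (m z e) h = (2 : F)⁻¹ • m z h := by rw [hzf e h he_mem hh_mem, heh, map_smul]
  have hte : m (m z h) e = (2 : F)⁻¹ • m z h := by rw [hzf h e hh_mem he_mem, heh2, map_smul]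
  have hth : m (m z h) h = z := by rw [hzf h h hh_mem hh_mem, hhh, hmul1]
  have hve2 : m e (m z e) = m z e := (comm e (m z e)).trans hve
  have hve3 : m (m e z) e = m z e := by rw [comm e z]; exact hve
  have hve4 : m e (m e z) = m z e := by rw [comm e z]; exact hve2
  have hvh2 : m h (m z e) = (2 : F)⁻¹ • m z h := (comm h (m z e)).trans hvh
  have hvh3 : m (m e z) h = (2 : F)⁻¹ • m z h := by rw [comm e z]; exact hvh
  have hvh4 : m h (m e z) = (2 : F)⁻¹ • m z h := by rw [comm e z]; exact hvh2
  have hte2 : m e (m z h) = (2 : F)⁻¹ • m z h := (comm e (m z h)).trans hte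
  have hte3 : m (m h z) e = (2 : F)⁻¹ • m z h := by rw [comm h z]; exact hte
  have hte4 : m e (m h z) = (2 : F)⁻¹ • m z h := by rw [comm h z]; exact hte2
  have hth2 : m h (m z h) = z := (comm h (m z h)).trans hth
  have hth3 : m (m h z) h = z := by rw [comm h z]; exact hth
  have hth4 : m h (m h z) = z := by rw [comm h z]; exact hth2
  have P : ∀ x u y : J, (2 : F) • (m (m (m x u) y) x - m (m x u) (m y x))
      + (m (m (m x x) y) u - m (m x x) (m y u)) = 0 := by
    intro x u y
    linear_combination (norm := (simp only [map_add, map_sub, LinearMap.add_apply,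
      LinearMap.sub_apply, comm]; match_scalars <;> (try ring_nf; try field_simp; try ring1)))
      (2 : F)⁻¹ • jordan (x + u) y - (2 : F)⁻¹ • jordan (x - u) y - jordan u y
  have FLem : ∀ x u v y : J,
      (m (m (m u v) y) x - m (m u v) (m y x)) + (m (m (m x u) y) v - m (m x u) (m y v))
      + (m (m (m x v) y) u - m (m x v) (m y u)) = 0 := by
    intro x u v y
    linear_combination (norm := (simp only [map_add, LinearMap.add_apply, comm]; match_scalars <;> (try ring_nf; try field_simp; try ring1)))
      (2 : F)⁻¹ • P (x + v) u y - (2 : F)⁻¹ • P x u y - (2 : F)⁻¹ • P v u y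
  have D0 : (1 : F) • (m e (m h (m z n))) + ((-1 : F)/2) • (m h (m z n)) = 0 := by
    linear_combination (norm := (simp only [jassoc, comm, one_mul, hmul1, hee, hhh, heh, heh2, hen, hen2, hhn, hhn2, hve, hve2, hve3, hve4, hvh, hvh2, hvh3, hvh4, hte, hte2, hte3, hte4, hth, hth2, hth3, hth4, map_add, map_sub, map_smul, map_zero, LinearMap.add_apply, LinearMap.sub_apply, LinearMap.smul_apply, LinearMap.zero_apply, smul_zero]; match_scalars <;> (try ring_nf; try field_simp; try ring1)))
      (1 : F) • (FLem z e n h)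
  have D1 : (1 : F) • (m e (m h (m n (m z e)))) + ((-1 : F)/2) • (m h (m n (m z e))) + ((1 : F)/4) • (m n (m z h)) = 0 := by
    linear_combination (norm := (simp only [jassoc, comm, one_mul, hmul1, hee, hhh, heh, heh2, hen, hen2, hhn, hhn2, hve, hve2, hve3, hve4, hvh, hvh2, hvh3, hvh4, hte, hte2, hte3, hte4, hth, hth2, hth3, hth4, map_add, map_sub, map_smul, map_zero, LinearMap.add_apply, LinearMap.sub_apply, LinearMap.smul_apply, LinearMap.zero_apply, smul_zero]; match_scalars <;> (try ring_nf; try field_simp; try ring1)))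
      (1 : F) • (FLem e n (m z e) h)
  have D2 : (1 : F) • (m h (m h (m z n))) = 0 := by
    linear_combination (norm := (simp only [jassoc, comm, one_mul, hmul1, hee, hhh, heh, heh2, hen, hen2, hhn, hhn2, hve, hve2, hve3, hve4, hvh, hvh2, hvh3, hvh4, hte, hte2, hte3, hte4, hth, hth2, hth3, hth4, map_add, map_sub, map_smul, map_zero, LinearMap.add_apply, LinearMap.sub_apply, LinearMap.smul_apply, LinearMap.zero_apply, smul_zero]; match_scalars <;> (try ring_nf; try field_simp; try ring1)))
      (1 : F) • (FLem z h n h)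
  have D3 : (1 : F) • (m e (m e (m e (m e (m z n))))) + (-2 : F) • (m e (m n (m z e))) + ((1 : F)/8) • (m h (m h (m n (m z e)))) + ((7 : F)/8) • (m n (m z e)) = 0 := by
    linear_combination (norm := (simp only [jassoc, comm, one_mul, hmul1, hee, hhh, heh, heh2, hen, hen2, hhn, hhn2, hve, hve2, hve3, hve4, hvh, hvh2, hvh3, hvh4, hte, hte2, hte3, hte4, hth, hth2, hth3, hth4, map_add, map_sub, map_smul, map_zero, LinearMap.add_apply, LinearMap.sub_apply, LinearMap.smul_apply, LinearMap.zero_apply, smul_zero]; match_scalars <;> (try ring_nf; try field_simp; try ring1)))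
      ((1 : F)/2) • (FLem e e (m e (m z n)) e) + ((3 : F)/4) • (FLem e e (m z n) e) + ((1 : F)/8) • (FLem h n (m z e) h) + (-1 : F) • (FLem z e e n) + ((7 : F)/4) • (FLem z e n e)
  have D4 : (1 : F) • (m e (m e (m e (m z n)))) + (-2 : F) • (m e (m e (m e (m e (m z n))))) + (2 : F) • (m e (m n (m z e))) + (-1 : F) • (m n (m z e)) = 0 := by
    linear_combination (norm := (simp only [jassoc, comm, one_mul, hmul1, hee, hhh, heh, heh2, hen, hen2, hhn, hhn2, hve, hve2, hve3, hve4, hvh, hvh2, hvh3, hvh4, hte, hte2, hte3, hte4, hth, hth2, hth3, hth4, map_add, map_sub, map_smul, map_zero, LinearMap.add_apply, LinearMap.sub_apply, LinearMap.smul_apply, LinearMap.zero_apply, smul_zero]; match_scalars <;> (try ring_nf; try field_simp; try ring1)))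
      (-1 : F) • (FLem e e (m e (m z n)) e) + (-1 : F) • (FLem e e (m z n) e) + (1 : F) • (FLem z e e n) + (-2 : F) • (FLem z e n e)
  have D5 : (1 : F) • (m z (m h (m z n))) + ((1 : F)/2) • (m n (m h (m z z))) + (-1 : F) • (m (m z h) (m z n)) = 0 := by
    linear_combination (norm := (simp only [jassoc, comm, one_mul, hmul1, hee, hhh, heh, heh2, hen, hen2, hhn, hhn2, hve, hve2, hve3, hve4, hvh, hvh2, hvh3, hvh4, hte, hte2, hte3, hte4, hth, hth2, hth3, hth4, map_add, map_sub, map_smul, map_zero, LinearMap.add_apply, LinearMap.sub_apply, LinearMap.smul_apply, LinearMap.zero_apply, smul_zero]; match_scalars <;> (try ring_nf; try field_simp; try ring1)))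
      ((1 : F)/2) • (FLem z z n h)
  have D6 : (1 : F) • (m h (m z n)) + (-2 : F) • (m h (m e (m z n))) = 0 := by
    linear_combination (norm := (simp only [jassoc, comm, one_mul, hmul1, hee, hhh, heh, heh2, hen, hen2, hhn, hhn2, hve, hve2, hve3, hve4, hvh, hvh2, hvh3, hvh4, hte, hte2, hte3, hte4, hth, hth2, hth3, hth4, map_add, map_sub, map_smul, map_zero, LinearMap.add_apply, LinearMap.sub_apply, LinearMap.smul_apply, LinearMap.zero_apply, smul_zero]; match_scalars <;> (try ring_nf; try field_simp; try ring1)))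
      (-2 : F) • (FLem z h n e)
  have D7 : (1 : F) • (m e (m n (m z h))) + ((-1 : F)/2) • (m h (m z n)) + (1 : F) • (m h (m n (m z e))) + ((-1 : F)/2) • (m n (m z h)) = 0 := by
    linear_combination (norm := (simp only [jassoc, comm, one_mul, hmul1, hee, hhh, heh, heh2, hen, hen2, hhn, hhn2, hve, hve2, hve3, hve4, hvh, hvh2, hvh3, hvh4, hte, hte2, hte3, hte4, hth, hth2, hth3, hth4, map_add, map_sub, map_smul, map_zero, LinearMap.add_apply, LinearMap.sub_apply, LinearMap.smul_apply, LinearMap.zero_apply, smul_zero]; match_scalars <;> (try ring_nf; try field_simp; try ring1)))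
      (1 : F) • (FLem z e h n)
  refine ⟨?_, ?_, ?_⟩
  · intro a ha b hb
    induction ha, hb using Submodule.span_induction₂ with
    | mem_mem a b ha hb =>
      simp only [Set.mem_insert_iff, Set.mem_singleton_iff] at ha hb
      rcases ha with ha | ha | ha <;> rcases hb with hb | hb | hb <;> rw [ha, hb]
      · linear_combination (norm := (simp only [jassoc, comm, one_mul, hmul1, hee, hhh, heh, heh2, hen, hen2, hhn, hhn2, hve, hve2, hve3, hve4, hvh, hvh2, hvh3, hvh4, hte, hte2, hte3, hte4, hth, hth2, hth3, hth4, map_add, map_sub, map_smul, map_zero, LinearMap.add_apply, LinearMap.sub_apply, LinearMap.smul_apply, LinearMap.zero_apply, smul_zero]; match_scalars <;> (try ring_nf; try field_simp; try ring1)))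
      · linear_combination (norm := (simp only [jassoc, comm, one_mul, hmul1, hee, hhh, heh, heh2, hen, hen2, hhn, hhn2, hve, hve2, hve3, hve4, hvh, hvh2, hvh3, hvh4, hte, hte2, hte3, hte4, hth, hth2, hth3, hth4, map_add, map_sub, map_smul, map_zero, LinearMap.add_apply, LinearMap.sub_apply, LinearMap.smul_apply, LinearMap.zero_apply, smul_zero]; match_scalars <;> (try ring_nf; try field_simp; try ring1)))
      · linear_combination (norm := (simp only [jassoc, comm, one_mul, hmul1, hee, hhh, heh, heh2, hen, hen2, hhn, hhn2, hve, hve2, hve3, hve4, hvh, hvh2, hvh3, hvh4, hte, hte2, hte3, hte4, hth, hth2, hth3, hth4, map_add, map_sub, map_smul, map_zero, LinearMap.add_apply, LinearMap.sub_apply, LinearMap.smul_apply, LinearMap.zero_apply, smul_zero]; match_scalars <;> (try ring_nf; try field_simp; try ring1)))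
      · linear_combination (norm := (simp only [jassoc, comm, one_mul, hmul1, hee, hhh, heh, heh2, hen, hen2, hhn, hhn2, hve, hve2, hve3, hve4, hvh, hvh2, hvh3, hvh4, hte, hte2, hte3, hte4, hth, hth2, hth3, hth4, map_add, map_sub, map_smul, map_zero, LinearMap.add_apply, LinearMap.sub_apply, LinearMap.smul_apply, LinearMap.zero_apply, smul_zero]; match_scalars <;> (try ring_nf; try field_simp; try ring1)))
      · linear_combination (norm := (simp only [jassoc, comm, one_mul, hmul1, hee, hhh, heh, heh2, hen, hen2, hhn, hhn2, hve, hve2, hve3, hve4, hvh, hvh2, hvh3, hvh4, hte, hte2, hte3, hte4, hth, hth2, hth3, hth4, map_add, map_sub, map_smul, map_zero, LinearMap.add_apply, LinearMap.sub_apply, LinearMap.smul_apply, LinearMap.zero_apply, smul_zero]; match_scalars <;> (try ring_nf; try field_simp; try ring1)))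
          ((-1 : F)/2) • (FLem e n (m z e) h) + ((-1 : F)/4) • (FLem z e h n) + ((1 : F)/4) • (FLem z e n h) + (1 : F) • (congrArg (fun x : J => m e x) D1) + ((-1 : F)/2) • (congrArg (fun x : J => m e x) D0)
      · linear_combination (norm := (simp only [jassoc, comm, one_mul, hmul1, hee, hhh, heh, heh2, hen, hen2, hhn, hhn2, hve, hve2, hve3, hve4, hvh, hvh2, hvh3, hvh4, hte, hte2, hte3, hte4, hth, hth2, hth3, hth4, map_add, map_sub, map_smul, map_zero, LinearMap.add_apply, LinearMap.sub_apply, LinearMap.smul_apply, LinearMap.zero_apply, smul_zero]; match_scalars <;> (try ring_nf; try field_simp; try ring1)))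
          ((1 : F)/2) • (FLem h h (m n (m z e)) e) + ((-1 : F)/4) • (FLem h h (m z n) e)
      · linear_combination (norm := (simp only [jassoc, comm, one_mul, hmul1, hee, hhh, heh, heh2, hen, hen2, hhn, hhn2, hve, hve2, hve3, hve4, hvh, hvh2, hvh3, hvh4, hte, hte2, hte3, hte4, hth, hth2, hth3, hth4, map_add, map_sub, map_smul, map_zero, LinearMap.add_apply, LinearMap.sub_apply, LinearMap.smul_apply, LinearMap.zero_apply, smul_zero]; match_scalars <;> (try ring_nf; try field_simp; try ring1)))
      · linear_combination (norm := (simp only [jassoc, comm, one_mul, hmul1, hee, hhh, heh, heh2, hen, hen2, hhn, hhn2, hve, hve2, hve3, hve4, hvh, hvh2, hvh3, hvh4, hte, hte2, hte3, hte4, hth, hth2, hth3, hth4, map_add, map_sub, map_smul, map_zero, LinearMap.add_apply, LinearMap.sub_apply, LinearMap.smul_apply, LinearMap.zero_apply, smul_zero]; match_scalars <;> (try ring_nf; try field_simp; try ring1)))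
          (-2 : F) • (FLem e e (m e (m z n)) e) + (-3 : F) • (FLem e e (m z e) n) + (-3 : F) • (FLem e e (m z n) e) + (8 : F) • (FLem e n (m z e) e) + ((-1 : F)/2) • (FLem h n (m z e) h) + (4 : F) • (FLem z e e n) + (-7 : F) • (FLem z e n e) + ((1 : F)/4) • (FLem z h n h) + (8 : F) • (congrArg (fun x : J => m e x) D3) + (4 : F) • (congrArg (fun x : J => m e x) D4) + ((-1 : F)/2) • (congrArg (fun x : J => m e x) D2)
      · linear_combination (norm := (simp only [jassoc, comm, one_mul, hmul1, hee, hhh, heh, heh2, hen, hen2, hhn, hhn2, hve, hve2, hve3, hve4, hvh, hvh2, hvh3, hvh4, hte, hte2, hte3, hte4, hth, hth2, hth3, hth4, map_add, map_sub, map_smul, map_zero, LinearMap.add_apply, LinearMap.sub_apply, LinearMap.smul_apply, LinearMap.zero_apply, smul_zero]; match_scalars <;> (try ring_nf; try field_simp; try ring1)))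
          ((1 : F)/2) • (FLem h h (m n (m z e)) h) + ((-1 : F)/4) • (FLem h h (m z n) h)
    | zero_left b hb => simp [jassoc]
    | zero_right a ha => simp [jassoc]
    | add_left x y b hx hy hb h1 h2 =>
      linear_combination (norm := (simp only [jassoc, map_add, LinearMap.add_apply]; match_scalars <;> (try ring_nf; try field_simp; try ring1))) h1 + h2
    | add_right a x y ha hx hy h1 h2 =>
      linear_combination (norm := (simp only [jassoc, map_add, LinearMap.add_apply]; match_scalars <;> (try ring_nf; try field_simp; try ring1))) h1 + h2
    | smul_left r x b hx hb h1 =>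
      linear_combination (norm := (simp only [jassoc, map_smul, LinearMap.smul_apply]; match_scalars <;> (try ring_nf; try field_simp; try ring1))) r • h1
    | smul_right r a x ha hx h1 =>
      linear_combination (norm := (simp only [jassoc, map_smul, LinearMap.smul_apply]; match_scalars <;> (try ring_nf; try field_simp; try ring1))) r • h1
  · linear_combination (norm := (simp only [jassoc, comm, one_mul, hmul1, hee, hhh, heh, heh2, hen, hen2, hhn, hhn2, hve, hve2, hve3, hve4, hvh, hvh2, hvh3, hvh4, hte, hte2, hte3, hte4, hth, hth2, hth3, hth4, map_add, map_sub, map_smul, map_zero, LinearMap.add_apply, LinearMap.sub_apply, LinearMap.smul_apply, LinearMap.zero_apply, smul_zero]; match_scalars <;> (try ring_nf; try field_simp; try ring1)))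
      (2 : F) • (FLem e e (m z e) (m h (m z n))) + (-2 : F) • (FLem e e (m z e) (m n (m z h))) + (-4 : F) • (FLem e h (m z e) (m e (m z n))) + (4 : F) • (FLem e h (m z e) (m n (m z e))) + (1 : F) • (FLem e h (m z n) z) + (1 : F) • (FLem e h (m z z) n) + (1 : F) • (FLem e n (m z h) z) + (-1 : F) • (FLem h n (m z e) z) + (-1 : F) • (FLem z e e (m h (m z n))) + (1 : F) • (FLem z e e (m n (m z h))) + (2 : F) • (FLem z e h (m e (m z n))) + (-2 : F) • (FLem z e h (m n (m z e))) + (-1 : F) • (FLem z e h (m z n)) + (-1 : F) • (FLem z e n (m z h)) + (1 : F) • (FLem z h n (m z e)) + ((1 : F)/2) • (FLem z z n h) + (-2 : F) • (congrArg (fun x : J => m e x) D5) + (-1 : F) • (congrArg (fun x : J => m z x) D7) + (1 : F) • (congrArg (fun x : J => m z x) D0) + ((1 : F)/2) • (congrArg (fun x : J => m z x) D6)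
  · linear_combination (norm := (simp only [jassoc, comm, one_mul, hmul1, hee, hhh, heh, heh2, hen, hen2, hhn, hhn2, hve, hve2, hve3, hve4, hvh, hvh2, hvh3, hvh4, hte, hte2, hte3, hte4, hth, hth2, hth3, hth4, map_add, map_sub, map_smul, map_zero, LinearMap.add_apply, LinearMap.sub_apply, LinearMap.smul_apply, LinearMap.zero_apply, smul_zero]; match_scalars <;> (try ring_nf; try field_simp; try ring1)))
      (2 : F) • (FLem e h (m z n) z) + (1 : F) • (FLem e h (m z z) n) + (-2 : F) • (FLem z e h (m z n)) + ((1 : F)/2) • (FLem z z n h) + (-2 : F) • (congrArg (fun x : J => m e x) D5)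
end

section
/- Let J be a unital Jordan algebra over a field of characteristic ≠ 2 containing H₂(F) as a unital subalgebra, with Z and N as in the H₂-decomposition. For z ∈ Z, n ∈ N, the products satisfy (ez)n = ½zn + [z,n]h and (hz)n = 2[z,n](1-2e), where [z,n] = h(z,e,n). -/
/-- Partial linearization of the Jordan identity. -/
private lemma jlin1 {F J : Type*} [Field F] [AddCommGroup J] [Module F J]
    (hchar : (2 : F) ≠ 0)
    (m : J →ₗ[F] J →ₗ[F] J)
    (comm : ∀ x y : J, m x y = m y x)
    (jordan : ∀ x y : J, m (m (m x x) y) x = m (m x x) (m y x)) :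
    ∀ x u y : J,
      m (m (m x x) y) u + (2 : F) • m (m (m x u) y) x =
      m (m x x) (m y u) + (2 : F) • m (m x u) (m y x) := by
  intro x u y
  have h1 := jordan (x + u) y
  have h2 := jordan (x - u) y
  have h4 := jordan u y
  simp only [map_add, map_sub, LinearMap.add_apply, LinearMap.sub_apply] at h1 h2
  rw [comm u x] at h1 h2
  linear_combination (norm := match_scalars <;> (field_simp; try ring))
    ((2 : F)⁻¹) • h1 - ((2 : F)⁻¹) • h2 - h4

/-- Full linearization of the Jordan identity. -/
private lemma jlin {F J : Type*} [Field F] [AddCommGroup J] [Module F J]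
    (hchar : (2 : F) ≠ 0)
    (m : J →ₗ[F] J →ₗ[F] J)
    (comm : ∀ x y : J, m x y = m y x)
    (jordan : ∀ x y : J, m (m (m x x) y) x = m (m x x) (m y x)) :
    ∀ a b c d : J,
      m (m (m a b) c) d + m (m (m b d) c) a + m (m (m a d) c) b =
      m (m a b) (m c d) + m (m b d) (m c a) + m (m a d) (m c b) := by
  intro a b c d
  have k1 := jlin1 hchar m comm jordan (a + b) d c
  have k2 := jlin1 hchar m comm jordan (a - b) d c
  simp only [map_add, map_sub, LinearMap.add_apply, LinearMap.sub_apply,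
    smul_add, smul_sub] at k1 k2
  rw [comm b a] at k1 k2
  linear_combination (norm := match_scalars <;> (field_simp; try ring))
    ((2 : F)⁻¹ * (2 : F)⁻¹) • k1 - ((2 : F)⁻¹ * (2 : F)⁻¹) • k2

/-- (ez)n = ½zn + [z,n]h and (hz)n = 2[z,n](1-2e), where [z,n] = h(z,e,n). -/
theorem stmt14 {F J : Type*} [Field F] [AddCommGroup J] [Module F J]
    (hchar : (2 : F) ≠ 0)
    (m : J →ₗ[F] J →ₗ[F] J)
    (comm : ∀ x y : J, m x y = m y x)
    (jordan : ∀ x y : J, m (m (m x x) y) x = m (m x x) (m y x))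
    (one e h : J)
    (one_mul : ∀ x : J, m one x = x)
    (hee : m e e = e) (hhh : m h h = one) (heh : m e h = (2 : F)⁻¹ • h)
    (hli : LinearIndependent F ![one, e, h]) :
    ∀ z ∈ Zset m one e h, ∀ n ∈ Nset m e h,
      m (m e z) n = (2 : F)⁻¹ • m z n + m (m h (jassoc m z e n)) h ∧
      m (m h z) n = (2 : F) • m (m h (jassoc m z e n)) (one - (2 : F) • e) := by
  intro z hz n hn
  simp only [Zset, Set.mem_setOf_eq] at hz
  simp only [Nset, Set.mem_setOf_eq] at hn
  obtain ⟨hen, hhn⟩ := hn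
  have mone : ∀ x : J, m x one = x := fun x => by rw [comm]; exact one_mul x
  have heH : e ∈ H2span (F := F) one e h := Submodule.subset_span (by simp)
  have hhH : h ∈ H2span (F := F) one e h := Submodule.subset_span (by simp)
  have lin := jlin hchar m comm jordan
  -- (zh)h = z
  have zhh : m (m z h) h = z := by
    have hz1 := hz h hhH h hhH
    simp only [jassoc, hhh, mone, sub_eq_zero] at hz1
    exact hz1
  -- (zh)e = ½ zh
  have zhe : m (m z h) e = (2 : F)⁻¹ • m z h := by
    have hz1 := hz h hhH e heH
    simp only [jassoc, comm h e, heh, map_smul, sub_eq_zero] at hz1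
    exact hz1
  -- A2 : ((zh)n)h = 0
  have A2 : m (m (m z h) n) h = 0 := by
    have L1 := lin h z n h
    simp only [comm h z, comm n h, hhn, hhh, one_mul, map_zero,
      LinearMap.zero_apply, add_zero, zero_add] at L1
    linear_combination (norm := match_scalars <;> (field_simp; try ring))
      ((2 : F)⁻¹) • L1
  -- B3 : (zn)h = 0
  have B3 : m (m z n) h = 0 := by
    have L1 := lin h (m z h) n h
    simp only [comm h (m z h), zhh, comm n h, hhn, hhh, one_mul, map_zero,
      LinearMap.zero_apply, add_zero, zero_add] at L1
    linear_combination (norm := match_scalars <;> (field_simp; try ring))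
      ((2 : F)⁻¹) • L1
  -- A3 : ((zh)n)e + ((ze)n)h = ½ (zh)n
  have A3 : m (m (m z h) n) e + m (m (m z e) n) h = (2 : F)⁻¹ • m (m z h) n := by
    have L1 := lin h z n e
    simp only [comm h z, comm n e, hen, comm n h, hhn, comm h e, heh, comm n z,
      comm h (m z n), B3, map_smul, LinearMap.smul_apply, map_zero,
      LinearMap.zero_apply, smul_zero, add_zero, zero_add] at L1
    linear_combination (norm := match_scalars <;> (field_simp; try ring)) L1
  -- Ree : (((zh)n)e)e = ((zh)n)e
  have Ree : m (m (m (m z h) n) e) e = m (m (m z h) n) e := by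
    have L1 := lin e (m z h) e n
    simp only [comm e (m z h), zhe, comm n e, hen, hee, comm n (m z h),
      map_smul, LinearMap.smul_apply] at L1
    linear_combination (norm := match_scalars <;> (field_simp; try ring)) L1
  -- Reh : (ze)n + (((zh)n)e)h = ½ zn
  have Reh : m (m z e) n + m (m (m (m z h) n) e) h = (2 : F)⁻¹ • m z n := by
    have L1 := lin h (m z h) e n
    simp only [comm h (m z h), zhh, hhn, hen, heh, A2, map_smul,
      LinearMap.smul_apply, map_zero, LinearMap.zero_apply, smul_zero,
      add_zero, zero_add] at L1
    linear_combination (norm := match_scalars <;> (field_simp; try ring)) L1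
  -- the bracket element
  have hX : m h (jassoc m z e n) =
      (2 : F)⁻¹ • m (m z h) n - m (m (m z h) n) e := by
    simp only [jassoc, hen, map_sub, map_smul]
    rw [comm h (m (m z e) n), comm h (m z n)]
    linear_combination (norm := match_scalars <;> (field_simp; try ring))
      A3 - ((2 : F)⁻¹) • B3
  constructor
  · rw [comm e z, hX]
    simp only [map_sub, map_smul, LinearMap.sub_apply, LinearMap.smul_apply]
    linear_combination (norm := match_scalars <;> (field_simp; try ring))
      Reh - ((2 : F)⁻¹) • A2
  · rw [comm h z, hX]
    simp only [map_sub, map_smul, LinearMap.sub_apply, LinearMap.smul_apply,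
      smul_sub, mone]
    linear_combination (norm := match_scalars <;> (field_simp; try ring))
      (-4 : F) • Ree
end

section
/- Let S be a Jordan algebra over a field of characteristic ≠ 2 equipped with an anticommutative bilinear bracket {.,.} satisfying (x,y,z) = 4{y,{x,z}} and {xy,z} = x{y,z} + y{x,z} = {y,xz} + {x,yz} for all x,y,z ∈ S. Then the product x*y := xy + 2{x,y} is associative. -/
/-- A Jordan algebra with a suitable anticommutative bracket gives an
associative product x*y = xy + 2{x,y}. -/
theorem stmt18 {F S : Type*} [Field F] [AddCommGroup S] [Module F S]
    (hchar : (2 : F) ≠ 0)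
    (m : S →ₗ[F] S →ₗ[F] S)
    (comm : ∀ x y : S, m x y = m y x)
    (jordan : ∀ x y : S, m (m (m x x) y) x = m (m x x) (m y x))
    (br : S →ₗ[F] S →ₗ[F] S)
    (anti : ∀ x y : S, br x y = - br y x)
    (hassoc : ∀ x y z : S,
      m (m x y) z - m x (m y z) = (4 : F) • br y (br x z))
    (hder1 : ∀ x y z : S, br (m x y) z = m x (br y z) + m y (br x z))
    (hder2 : ∀ x y z : S, br (m x y) z = br y (m x z) + br x (m y z)) :
    ∀ x y z : S,
      (fun u v => m u v + (2 : F) • br u v)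
          ((fun u v => m u v + (2 : F) • br u v) x y) z =
      (fun u v => m u v + (2 : F) • br u v) x
          ((fun u v => m u v + (2 : F) • br u v) y z) := by
  intro x y z
  have h4 : (4 : F) ≠ 0 := by
    have h : (4 : F) = 2 * 2 := by norm_num
    rw [h]; exact mul_ne_zero hchar hchar
  have jac : ∀ a b c : S, br b (br a c) + br c (br b a) + br a (br c b) = 0 := by
    intro a b c
    have hsum : (4 : F) • (br b (br a c) + br c (br b a) + br a (br c b)) = 0 := by
      rw [smul_add, smul_add, ← hassoc a b c, ← hassoc b c a, ← hassoc c a b,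
        comm (m a b) c, comm (m b c) a, comm (m c a) b]
      abel
    exact (smul_eq_zero.mp hsum).resolve_left h4
  have e1 : m (m x y) z = (4 : F) • br y (br x z) + m x (m y z) :=
    sub_eq_iff_eq_add.mp (hassoc x y z)
  have e2 : br (m x y) z = m x (br y z) + m y (br x z) := hder1 x y z
  have e3 : br x (m y z) = m y (br x z) + m z (br x y) := by
    rw [anti x (m y z), hder1 y z x, anti z x, anti y x]
    simp only [map_neg, neg_add, neg_neg]
  have e6 : br (br x y) z = br x (br y z) - br y (br x z) := by
    have h := jac x y z
    have h1 : br z (br y x) = br (br x y) z := by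
      rw [anti y x, map_neg]; exact (anti _ _).symm
    have h2 : br x (br z y) = - br x (br y z) := by
      rw [anti z y, map_neg]
    rw [h1, h2] at h
    linear_combination (norm := abel) h
  simp only [map_add, map_smul, LinearMap.add_apply, LinearMap.smul_apply, smul_add]
  rw [e1, e2, e3, e6, comm (br x y) z]
  module
end
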